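/- (Garside normal form) Let ι : Br_n^+ → Br_n be the canonical homomorphism and let Δ = (σ_1⋯σ_{n-1})(σ_1⋯σ_{n-2})⋯σ_1 ∈ Br_n^+. Every element w of the braid group Br_n can be written as w = ι(Δ)^m ι(A) for a unique integer m and a unique element A ∈ Br_n^+ that is prime to Δ, i.e. such that there exist no U, V ∈ Br_n^+ with A = U Δ V. -/

import Mathlib

/-- The braid relations on the free monoid on `m` generators `σ_1, …, σ_m` (0-indexed):
`σ_i σ_j = σ_j σ_i` for `|i - j| > 1` and `σ_i σ_{i+1} σ_i = σ_{i+1} σ_i σ_{i+1}`. -/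
def braidMonoidRels (m : ℕ) : FreeMonoid (Fin m) → FreeMonoid (Fin m) → Prop := fun a b =>
  (∃ i j : Fin m, (i : ℕ) + 1 < (j : ℕ) ∧
    a = FreeMonoid.of i * FreeMonoid.of j ∧ b = FreeMonoid.of j * FreeMonoid.of i) ∨
  (∃ i j : Fin m, (i : ℕ) + 1 = (j : ℕ) ∧
    a = FreeMonoid.of i * FreeMonoid.of j * FreeMonoid.of i ∧
    b = FreeMonoid.of j * FreeMonoid.of i * FreeMonoid.of j)

/-- The positive braid monoid `Br_n⁺`, presented by the generators `σ_1, …, σ_{n-1}`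
(0-indexed) and the braid relations. -/
abbrev BraidMonoid (n : ℕ) : Type := PresentedMonoid (braidMonoidRels (n - 1))

/-- The standard generator `σ_{i+1}` of `Br_n⁺` (0-indexed). -/
def σp {n : ℕ} (i : Fin (n - 1)) : BraidMonoid n :=
  PresentedMonoid.of (braidMonoidRels (n - 1)) i

/-- The generator `σ_{i+1}` of `Br_n⁺` for a natural-number index (0-indexed), extended by
`1` outside the legal range. -/
def σp' {n : ℕ} (i : ℕ) : BraidMonoid n := if h : i < n - 1 then σp ⟨i, h⟩ else 1

/-- The word `Π_t = σ_1 σ_2 ⋯ σ_t` in `Br_n⁺` (0-indexed: `σ_0 ⋯ σ_{t-1}`). -/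
def garsidePi {n : ℕ} (t : ℕ) : BraidMonoid n :=
  ((List.range t).map fun k => σp' (n := n) k).prod

/-- Garside's fundamental word `Δ = Π_{n-1} Π_{n-2} ⋯ Π_1 ∈ Br_n⁺`, where
`Π_t = σ_1 σ_2 ⋯ σ_t`. -/
def garsideDelta (n : ℕ) : BraidMonoid n :=
  ((List.range (n - 1)).map fun k => garsidePi (n := n) (n - 1 - k)).prod

/-- The braid relations on `m` generators, in the free group. -/
def braidRels (m : ℕ) : Set (FreeGroup (Fin m)) :=
  {r | (∃ i j : Fin m, (i : ℕ) + 1 < (j : ℕ) ∧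
        r = FreeGroup.of i * FreeGroup.of j * (FreeGroup.of i)⁻¹ * (FreeGroup.of j)⁻¹) ∨
       (∃ i j : Fin m, (i : ℕ) + 1 = (j : ℕ) ∧
        r = FreeGroup.of i * FreeGroup.of j * FreeGroup.of i *
            (FreeGroup.of j * FreeGroup.of i * FreeGroup.of j)⁻¹)}

/-- The braid group `Br_n`, presented by the same generators and relations. -/
abbrev BraidGroup (n : ℕ) : Type := PresentedGroup (braidRels (n - 1))

/-- The standard generator `σ_{i+1}` of `Br_n` (0-indexed). -/
def σ {n : ℕ} (i : Fin (n - 1)) : BraidGroup n := PresentedGroup.of i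

/-- An element `A` of `Br_n⁺` is prime to `Δ` if it cannot be written as `U Δ V` with
`U, V ∈ Br_n⁺`. -/
def PrimeToDelta {n : ℕ} (A : BraidMonoid n) : Prop :=
  ¬ ∃ U V : BraidMonoid n, A = U * garsideDelta n * V

namespace Gar

variable {m : ℕ}

/-- distant indices -/
def Far (i j : Fin m) : Prop := (i : ℕ) + 1 < j ∨ (j : ℕ) + 1 < i

/-- adjacent indices -/
def Adj (i j : Fin m) : Prop := (i : ℕ) + 1 = j ∨ (j : ℕ) + 1 = i

theorem Far.symm {i j : Fin m} (h : Far i j) : Far j i := h.elim .inr .inl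
theorem Adj.symm {i j : Fin m} (h : Adj i j) : Adj j i := h.elim .inr .inl

theorem trichotomy (i j : Fin m) : i = j ∨ Far i j ∨ Adj i j := by
  rcases i with ⟨i, hi⟩; rcases j with ⟨j, hj⟩
  simp only [Far, Adj, Fin.mk.injEq]
  omega

theorem Far.ne {i j : Fin m} (h : Far i j) : i ≠ j := by
  intro he; subst he; rcases h with h | h <;> omega

theorem Adj.ne {i j : Fin m} (h : Adj i j) : i ≠ j := by
  intro he; subst he; rcases h with h | h <;> omega

theorem Adj.not_far {i j : Fin m} (h : Adj i j) : ¬ Far i j := by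
  rcases i with ⟨i, hi⟩; rcases j with ⟨j, hj⟩
  simp_all only [Adj, Far]; omega

/-- one elementary rewriting step on words -/
def Step (u v : List (Fin m)) : Prop :=
  (∃ (s t : List (Fin m)) (i j : Fin m), Far i j ∧
     u = s ++ i :: j :: t ∧ v = s ++ j :: i :: t) ∨
  (∃ (s t : List (Fin m)) (i j : Fin m), Adj i j ∧
     u = s ++ i :: j :: i :: t ∧ v = s ++ j :: i :: j :: t)

theorem Step.symm' {u v : List (Fin m)} (h : Step u v) : Step v u := by
  rcases h with ⟨s, t, i, j, hf, hu, hv⟩ | ⟨s, t, i, j, ha, hu, hv⟩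
  · exact .inl ⟨s, t, j, i, hf.symm, hv, hu⟩
  · exact .inr ⟨s, t, j, i, ha.symm, hv, hu⟩

/-- word equivalence: chains of elementary steps -/
def Beq (u v : List (Fin m)) : Prop := Relation.ReflTransGen Step u v

theorem Beq.refl (u : List (Fin m)) : Beq u u := Relation.ReflTransGen.refl

theorem Beq.of_step {u v : List (Fin m)} (h : Step u v) : Beq u v :=
  Relation.ReflTransGen.single h

theorem Beq.trans {u v w : List (Fin m)} (h : Beq u v) (h' : Beq v w) : Beq u w :=
  Relation.ReflTransGen.trans h h'

theorem Beq.symm {u v : List (Fin m)} (h : Beq u v) : Beq v u :=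
  haveI : Std.Symm (@Step m) := ⟨fun _ _ hs => Step.symm' hs⟩
  Std.Symm.symm (r := Relation.ReflTransGen Step) _ _ h

theorem Step.append {u v : List (Fin m)} (s t : List (Fin m)) (h : Step u v) :
    Step (s ++ u ++ t) (s ++ v ++ t) := by
  rcases h with ⟨a, b, i, j, hf, hu, hv⟩ | ⟨a, b, i, j, ha, hu, hv⟩
  · exact .inl ⟨s ++ a, b ++ t, i, j, hf, by simp [hu], by simp [hv]⟩
  · exact .inr ⟨s ++ a, b ++ t, i, j, ha, by simp [hu], by simp [hv]⟩

theorem Beq.append {u v : List (Fin m)} (s t : List (Fin m)) (h : Beq u v) :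
    Beq (s ++ u ++ t) (s ++ v ++ t) :=
  Relation.ReflTransGen.lift (fun w => s ++ w ++ t) (fun a b (hs : Step a b) => hs.append s t) _ _ h

theorem Beq.append_left {u v : List (Fin m)} (s : List (Fin m)) (h : Beq u v) :
    Beq (s ++ u) (s ++ v) := by
  simpa using h.append s []

theorem Beq.append_right {u v : List (Fin m)} (t : List (Fin m)) (h : Beq u v) :
    Beq (u ++ t) (v ++ t) := by
  simpa using h.append [] t

theorem Beq.cons {u v : List (Fin m)} (a : Fin m) (h : Beq u v) :
    Beq (a :: u) (a :: v) := by
  simpa using h.append_left [a]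

theorem Beq.mul {u v u' v' : List (Fin m)} (h : Beq u v) (h' : Beq u' v') :
    Beq (u ++ u') (v ++ v') :=
  (h.append_right u').trans (h'.append_left v)

theorem Beq.length_eq {u v : List (Fin m)} (h : Beq u v) : u.length = v.length := by
  induction h with
  | refl => rfl
  | tail _ hs ih =>
    rcases hs with ⟨s, t, i, j, _, hu, hv⟩ | ⟨s, t, i, j, _, hu, hv⟩ <;> simp_all

/-- the swap step as Beq, no surrounding context -/
theorem beq_swap {i j : Fin m} (h : Far i j) (t : List (Fin m)) :
    Beq (i :: j :: t) (j :: i :: t) :=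
  Beq.of_step (.inl ⟨[], t, i, j, h, rfl, rfl⟩)

theorem beq_braid {i j : Fin m} (h : Adj i j) (t : List (Fin m)) :
    Beq (i :: j :: i :: t) (j :: i :: j :: t) :=
  Beq.of_step (.inr ⟨[], t, i, j, h, rfl, rfl⟩)

end Gar

namespace Gar
variable {m : ℕ}
open FreeMonoid

abbrev BM (m : ℕ) := PresentedMonoid (braidMonoidRels m)

/-- the canonical map from words to the braid monoid -/
def mkw (u : List (Fin m)) : BM m := PresentedMonoid.mk (braidMonoidRels m) (ofList u)

theorem mkw_nil : mkw ([] : List (Fin m)) = 1 := rfl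

theorem mkw_append (u v : List (Fin m)) : mkw (u ++ v) = mkw u * mkw v := by
  unfold mkw; rw [ofList_append, map_mul]

theorem mkw_surjective : Function.Surjective (mkw (m := m)) := by
  intro x
  obtain ⟨a, rfl⟩ := PresentedMonoid.surjective_mk x
  exact ⟨toList a, rfl⟩

/-- The congruence defining the braid monoid coincides with step-chain equivalence. -/
theorem congen_iff_beq (u v : List (Fin m)) :
    conGen (braidMonoidRels m) (ofList u) (ofList v) ↔ Beq u v := by
  constructor
  · intro h
    -- build a Con whose relation is Beq
    let c : Con (FreeMonoid (Fin m)) :=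
    { r := fun a b => Beq (toList a) (toList b)
      iseqv := ⟨fun a => Beq.refl _, Beq.symm, Beq.trans⟩
      mul' := fun h1 h2 => by
        simpa [toList_mul] using Beq.mul h1 h2 }
    have hle : conGen (braidMonoidRels m) ≤ c := by
      apply Con.conGen_le.mpr
      rintro a b (⟨i, j, hij, ha, hb⟩ | ⟨i, j, hij, ha, hb⟩)
      · subst ha; subst hb
        exact beq_swap (Or.inl hij) []
      · subst ha; subst hb
        exact beq_braid (Or.inl hij) []
    exact hle h
  · intro h
    induction h with
    | refl => exact (conGen (braidMonoidRels m)).refl _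
    | tail hchain hstep ih =>
      refine (conGen (braidMonoidRels m)).trans ih ?_
      rename_i b c
      have key : ∀ x y : List (Fin m), Step x y →
          conGen (braidMonoidRels m) (ofList x) (ofList y) := by
        rintro x y (⟨s, t, i, j, hf, hx, hy⟩ | ⟨s, t, i, j, ha, hx, hy⟩)
        · subst hx; subst hy
          have base : conGen (braidMonoidRels m) (of i * of j) (of j * of i) := by
            rcases hf with hf | hf
            · exact ConGen.Rel.of (of i * of j) (of j * of i) (Or.inl ⟨i, j, hf, rfl, rfl⟩)
            · exact ConGen.Rel.symm
                (ConGen.Rel.of (of j * of i) (of i * of j) (Or.inl ⟨j, i, hf, rfl, rfl⟩))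
          have : conGen (braidMonoidRels m)
              (ofList s * (of i * of j) * ofList t) (ofList s * (of j * of i) * ofList t) :=
            (conGen _).mul ((conGen _).mul ((conGen _).refl _) base) ((conGen _).refl _)
          simpa [ofList_append, ofList_cons, mul_assoc] using this
        · subst hx; subst hy
          have base : conGen (braidMonoidRels m)
              (of i * of j * of i) (of j * of i * of j) := by
            rcases ha with ha | ha
            · exact ConGen.Rel.of (of i * of j * of i) (of j * of i * of j)
                (Or.inr ⟨i, j, ha, rfl, rfl⟩)
            · exact ConGen.Rel.symm
                (ConGen.Rel.of (of j * of i * of j) (of i * of j * of i)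
                  (Or.inr ⟨j, i, ha, rfl, rfl⟩))
          have : conGen (braidMonoidRels m)
              (ofList s * (of i * of j * of i) * ofList t)
              (ofList s * (of j * of i * of j) * ofList t) :=
            (conGen _).mul ((conGen _).mul ((conGen _).refl _) base) ((conGen _).refl _)
          simpa [ofList_append, ofList_cons, mul_assoc] using this
      exact key _ _ hstep

theorem mkw_eq_iff {u v : List (Fin m)} : mkw u = mkw v ↔ Beq u v := by
  rw [← congen_iff_beq u v]
  exact Con.eq (conGen (braidMonoidRels m))

theorem mkw_eq_of_beq {u v : List (Fin m)} (h : Beq u v) : mkw u = mkw v :=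
  mkw_eq_iff.mpr h


instance (a b : Fin m) : Decidable (Far a b) := by unfold Far; exact inferInstance
instance (a b : Fin m) : Decidable (Adj a b) := by unfold Adj; exact inferInstance

/-- the completion word: `of a * (w a b)` is the right lcm of `of a` and `of b` -/
def w (a b : Fin m) : List (Fin m) :=
  if a = b then [] else if Far a b then [b] else [b, a]

@[simp] theorem w_self (a : Fin m) : w a a = [] := by simp [w]

theorem w_far {a b : Fin m} (h : Far a b) : w a b = [b] := by
  rw [w, if_neg h.ne, if_pos h]

theorem w_adj {a b : Fin m} (h : Adj a b) : w a b = [b, a] := by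
  rw [w, if_neg h.ne, if_neg h.not_far]

theorem adj_triple {a b c : Fin m} (h1 : Adj a b) (h2 : Adj a c) (h3 : Adj c b) : False := by
  rcases a with ⟨a, _⟩; rcases b with ⟨b, _⟩; rcases c with ⟨c, _⟩
  simp only [Adj, Fin.mk.injEq] at h1 h2 h3
  omega

theorem step_cons {a : Fin m} {X V : List (Fin m)} (h : Step (a :: X) V) :
    (∃ X₁, V = a :: X₁ ∧ Step X X₁) ∨
    (∃ c X', Far a c ∧ X = c :: X' ∧ V = c :: a :: X') ∨
    (∃ c X', Adj a c ∧ X = c :: a :: X' ∧ V = c :: a :: c :: X') := by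
  rcases h with ⟨s, t, i, j, hf, hu, hv⟩ | ⟨s, t, i, j, ha, hu, hv⟩
  · cases s with
    | nil =>
      simp only [List.nil_append, List.cons.injEq] at hu hv
      obtain ⟨rfl, rfl⟩ := hu
      exact .inr (.inl ⟨j, t, hf, rfl, by simp [hv]⟩)
    | cons x s =>
      simp only [List.cons_append, List.cons.injEq] at hu hv
      obtain ⟨rfl, rfl⟩ := hu
      exact .inl ⟨s ++ j :: i :: t, by simp [hv], .inl ⟨s, t, i, j, hf, rfl, rfl⟩⟩
  · cases s with
    | nil =>
      simp only [List.nil_append, List.cons.injEq] at hu hv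
      obtain ⟨rfl, rfl⟩ := hu
      exact .inr (.inr ⟨j, t, ha, rfl, by simp [hv]⟩)
    | cons x s =>
      simp only [List.cons_append, List.cons.injEq] at hu hv
      obtain ⟨rfl, rfl⟩ := hu
      exact .inl ⟨s ++ j :: i :: j :: t, by simp [hv], .inr ⟨s, t, i, j, ha, rfl, rfl⟩⟩


theorem key : ∀ (L : ℕ) (X Y : List (Fin m)) (a b : Fin m), X.length ≤ L →
    Beq (a :: X) (b :: Y) → ∃ Z, Beq X (w a b ++ Z) ∧ Beq Y (w b a ++ Z) := by
  intro L
  induction L using Nat.strong_induction_on with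
  | _ L IH =>
  have IH' : ∀ {X Y : List (Fin m)} {a b : Fin m}, X.length < L →
      Beq (a :: X) (b :: Y) → ∃ Z, Beq X (w a b ++ Z) ∧ Beq Y (w b a ++ Z) :=
    fun h hb => IH _ h _ _ _ _ le_rfl hb
  intro X Y a b hlen hch
  have main : ∀ (U : List (Fin m)) (h : Relation.ReflTransGen Step U (b :: Y)),
      ∀ (a' : Fin m) (X' : List (Fin m)), U = a' :: X' → X'.length ≤ L →
      ∃ Z, Beq X' (w a' b ++ Z) ∧ Beq Y (w b a' ++ Z) := by
    intro U h
    induction h using Relation.ReflTransGen.head_induction_on with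
    | refl =>
      rintro a' X' hU _
      obtain ⟨rfl, rfl⟩ : a' = b ∧ X' = Y := by
        simp only [List.cons.injEq] at hU; exact ⟨hU.1.symm, hU.2.symm⟩
      exact ⟨X', by simp [Beq.refl], by simp [Beq.refl]⟩
    | head hstep htail ih =>
      rintro a' X' rfl hlen
      rcases step_cons hstep with ⟨X₁, rfl, hs⟩ | ⟨c, X'', hfac, rfl, rfl⟩ |
        ⟨c, X'', hadc, rfl, rfl⟩
      · -- step inside the tail
        obtain ⟨Z, h1, h2⟩ := ih a' X₁ rfl (by
          have := (Beq.of_step hs).length_eq; omega)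
        exact ⟨Z, (Beq.of_step hs).trans h1, h2⟩
      · -- step at the front, far case : X' = c :: X'', C = c :: a' :: X''
        obtain ⟨Z₁, hE, hY⟩ := ih c (a' :: X'') rfl (by simp_all)
        have hlX : X''.length + 1 ≤ L := by simpa using hlen
        rcases trichotomy c b with rfl | hfcb | hacb
        · -- c = b
          simp only [w_self, List.nil_append] at hE hY
          refine ⟨X'', ?_, ?_⟩
          · simp only [w_far hfac, List.cons_append, List.nil_append]
            exact Beq.refl _
          · simp only [w_far hfac.symm, List.cons_append, List.nil_append]
            exact hY.trans (hE.symm)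
        · -- Far c b
          simp only [w_far hfcb, List.cons_append, List.nil_append] at hE
          simp only [w_far hfcb.symm, List.cons_append, List.nil_append] at hY
          obtain ⟨Z₂, hX2, hT2⟩ := IH' (by omega) hE
          rcases trichotomy a' b with rfl | hfab | haab
          · -- a' = b
            simp only [w_self, List.nil_append] at hX2 hT2 ⊢
            refine ⟨c :: X'', Beq.refl _, ?_⟩
            exact hY.trans ((Beq.cons c hT2).trans (Beq.cons c hX2.symm))
          · -- Far a' b  (F2a)
            simp only [w_far hfab, List.cons_append, List.nil_append] at hX2 ⊢
            simp only [w_far hfab.symm, List.cons_append, List.nil_append] at hT2 ⊢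
            refine ⟨c :: Z₂, ?_, ?_⟩
            · exact (Beq.cons c hX2).trans (beq_swap hfcb Z₂)
            · exact (hY.trans (Beq.cons c hT2)).trans (beq_swap hfac.symm Z₂)
          · -- Adj a' b  (F3a)
            simp only [w_adj haab] at hX2 ⊢
            simp only [w_adj haab.symm] at hT2 ⊢
            simp only [List.cons_append, List.nil_append] at hX2 hT2 ⊢
            refine ⟨c :: Z₂, ?_, ?_⟩
            · exact ((Beq.cons c hX2).trans (beq_swap hfcb (a' :: Z₂))).trans
                (Beq.cons b (beq_swap hfac.symm Z₂))
            · exact ((hY.trans (Beq.cons c hT2)).trans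
                (beq_swap hfac.symm (b :: Z₂))).trans
                (Beq.cons a' (beq_swap hfcb Z₂))
        · -- Adj c b
          simp only [w_adj hacb] at hE
          simp only [w_adj hacb.symm] at hY
          simp only [List.cons_append, List.nil_append] at hE hY
          obtain ⟨Z₂, hX2, hT2⟩ := IH' (by omega) hE
          have hlZ₁ : X''.length = Z₁.length + 1 := by
            have := hE.length_eq; simpa using this
          rcases trichotomy a' b with rfl | hfab | haab
          · -- a' = b : contradiction with Far a' c and Adj c b
            exact absurd hfac (hacb.symm.not_far)
          · -- Far a' b (F2b)
            simp only [w_far hfab, List.cons_append, List.nil_append] at hX2 ⊢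
            simp only [w_far hfab.symm, List.cons_append, List.nil_append] at hT2 ⊢
            obtain ⟨Z₃, hZ1, hZ2⟩ := IH' (by omega) hT2
            simp only [w_far hfac.symm, List.cons_append, List.nil_append] at hZ1
            simp only [w_far hfac, List.cons_append, List.nil_append] at hZ2
            refine ⟨c :: b :: Z₃, ?_, ?_⟩
            · exact ((Beq.cons c hX2).trans (Beq.cons c (Beq.cons b hZ2))).trans
                (beq_braid hacb Z₃)
            · exact ((hY.trans (Beq.cons c (Beq.cons b hZ1))).trans
                (Beq.cons c (beq_swap hfab.symm Z₃))).trans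
                (beq_swap hfac.symm (b :: Z₃))
          · -- Adj a' b (F3b)
            simp only [w_adj haab] at hX2 ⊢
            simp only [w_adj haab.symm] at hT2 ⊢
            simp only [List.cons_append, List.nil_append] at hX2 hT2 ⊢
            obtain ⟨Z₃, hZ1, hbZ2⟩ := IH' (by
              have := hT2.length_eq; simp at this; omega) hT2
            simp only [w_far hfac.symm, List.cons_append, List.nil_append] at hZ1
            simp only [w_far hfac, List.cons_append, List.nil_append] at hbZ2
            obtain ⟨Z₄, hZ2', hZ3⟩ := IH' (by
              have h1 := hT2.length_eq; have h2 := hZ1.length_eq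
              simp at h1 h2; omega) hbZ2
            simp only [w_adj hacb.symm] at hZ2'
            simp only [w_adj hacb] at hZ3
            simp only [List.cons_append, List.nil_append] at hZ2' hZ3
            refine ⟨c :: b :: a' :: Z₄, ?_, ?_⟩
            · -- c::X'' ≈ c b a' c b Z₄ ≈ b a' c b a' Z₄
              refine ((Beq.cons c hX2).trans
                (Beq.cons c (Beq.cons b (Beq.cons a' hZ2')))).trans ?_
              -- [c,b,a',c,b]++Z₄ → [c,b,c,a',b] → [b,c,b,a',b] → [b,c,a',b,a'] → [b,a',c,b,a']
              refine ((Beq.cons c (Beq.cons b (beq_swap hfac (b :: Z₄)))).trans ?_)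
              refine (beq_braid hacb (a' :: b :: Z₄)).trans ?_
              refine (Beq.cons b (Beq.cons c (beq_braid haab.symm Z₄))).trans ?_
              exact Beq.cons b (beq_swap hfac.symm (b :: a' :: Z₄))
            · -- Y ≈ c b a' b c Z₄ ≈ a' b c b a' Z₄
              refine (hY.trans (Beq.cons c (Beq.cons b hZ1))).trans ?_
              refine (Beq.cons c (Beq.cons b (Beq.cons a' hZ3))).trans ?_
              -- [c,b,a',b,c] → [c,a',b,a',c] → [a',c,b,a',c] → [a',c,b,c,a'] → [a',b,c,b,a']
              refine (Beq.cons c (beq_braid haab.symm (c :: Z₄))).trans ?_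
              refine (beq_swap hfac.symm (b :: a' :: c :: Z₄)).trans ?_
              refine (Beq.cons a' (Beq.cons c (Beq.cons b (beq_swap hfac Z₄)))).trans ?_
              exact Beq.cons a' (beq_braid hacb (a' :: Z₄))
      · -- step at the front, braid case : X' = c :: a' :: X'', C = c :: a' :: c :: X''
        obtain ⟨Z₁, hE, hY⟩ := ih c (a' :: c :: X'') rfl (by simp_all)
        have hlX : X''.length + 2 ≤ L := by simp at hlen; omega
        rcases trichotomy c b with rfl | hfcb | hacb
        · -- c = b (B1, c = b)
          simp only [w_self, List.nil_append] at hE hY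
          refine ⟨X'', ?_, ?_⟩
          · simp only [w_adj hadc, List.cons_append, List.nil_append]
            exact Beq.refl _
          · simp only [w_adj hadc.symm, List.cons_append, List.nil_append]
            exact hY.trans hE.symm
        · -- Far c b
          simp only [w_far hfcb, List.cons_append, List.nil_append] at hE
          simp only [w_far hfcb.symm, List.cons_append, List.nil_append] at hY
          obtain ⟨Z₂, hcX, hT⟩ := IH' (by simp; omega) hE
          rcases trichotomy a' b with rfl | hfab | haab
          · -- a' = b : Adj a' c contradicts Far c b
            exact absurd hfcb.symm hadc.not_far
          · -- Far a' b (B2a)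
            simp only [w_far hfab, List.cons_append, List.nil_append] at hcX ⊢
            simp only [w_far hfab.symm, List.cons_append, List.nil_append] at hT ⊢
            obtain ⟨Z₃, hX2, hZ2⟩ := IH' (by omega) hcX
            simp only [w_far hfcb, List.cons_append, List.nil_append] at hX2
            simp only [w_far hfcb.symm, List.cons_append, List.nil_append] at hZ2
            refine ⟨c :: a' :: Z₃, ?_, ?_⟩
            · exact ((Beq.cons c (Beq.cons a' hX2)).trans
                (Beq.cons c (beq_swap hfab (Z₃)))).trans (beq_swap hfcb (a' :: Z₃))
            · exact ((hY.trans (Beq.cons c hT)).trans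
                (Beq.cons c (Beq.cons a' hZ2))).trans (beq_braid hadc.symm Z₃)
          · -- Adj a' b (B3)
            simp only [w_adj haab] at hcX ⊢
            simp only [w_adj haab.symm] at hT ⊢
            simp only [List.cons_append, List.nil_append] at hcX hT ⊢
            obtain ⟨Z₃, hX2, haZ⟩ := IH' (by omega) hcX
            simp only [w_far hfcb, List.cons_append, List.nil_append] at hX2
            simp only [w_far hfcb.symm, List.cons_append, List.nil_append] at haZ
            obtain ⟨Z₄, hZ2, hZ3⟩ := IH' (by
              have h1 := hcX.length_eq; simp at h1; omega) haZ
            simp only [w_adj hadc] at hZ2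
            simp only [w_adj hadc.symm] at hZ3
            simp only [List.cons_append, List.nil_append] at hZ2 hZ3
            refine ⟨c :: a' :: b :: Z₄, ?_, ?_⟩
            · -- c a' X'' ≈ c a' b a' c Z₄ ≈ b a' c a' b Z₄
              refine ((Beq.cons c (Beq.cons a' hX2)).trans
                (Beq.cons c (Beq.cons a' (Beq.cons b hZ3)))).trans ?_
              -- [c,a',b,a',c] → [c,b,a',b,c] → [b,c,a',b,c] → [b,c,a',c,b] → [b,a',c,a',b]
              refine (Beq.cons c (beq_braid haab (c :: Z₄))).trans ?_
              refine (beq_swap hfcb (a' :: b :: c :: Z₄)).trans ?_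
              refine (Beq.cons b (Beq.cons c (Beq.cons a' (beq_swap hfcb.symm Z₄)))).trans ?_
              exact Beq.cons b ((beq_braid hadc (b :: Z₄)).symm)
            · -- Y ≈ c a' b c a' Z₄ ≈ a' b c a' b Z₄
              refine ((hY.trans (Beq.cons c hT)).trans
                (Beq.cons c (Beq.cons a' (Beq.cons b hZ2)))).trans ?_
              -- [c,a',b,c,a'] → [c,a',c,b,a'] → [a',c,a',b,a'] → [a',c,b,a',b] → [a',b,c,a',b]
              refine (Beq.cons c (Beq.cons a' (beq_swap hfcb.symm (a' :: Z₄)))).trans ?_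
              refine (beq_braid hadc.symm (b :: a' :: Z₄)).trans ?_
              refine (Beq.cons a' (Beq.cons c (beq_braid haab Z₄))).trans ?_
              exact Beq.cons a' (beq_swap hfcb (a' :: b :: Z₄))
        · -- Adj c b
          simp only [w_adj hacb] at hE
          simp only [w_adj hacb.symm] at hY
          simp only [List.cons_append, List.nil_append] at hE hY
          obtain ⟨Z₂, hcX, hT⟩ := IH' (by simp; omega) hE
          rcases trichotomy a' b with rfl | hfab | haab
          · -- a' = b (B1 with c ≠ b)
            simp only [w_self, List.nil_append] at hcX hT ⊢
            have hccX : Beq (c :: Z₁) (c :: X'') := hT.trans hcX.symm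
            obtain ⟨Z₅, h5a, h5b⟩ := IH' (by
              have h1 := hE.length_eq; simp at h1; omega) hccX
            simp only [w_self, List.nil_append] at h5a h5b
            refine ⟨c :: a' :: X'', Beq.refl _, ?_⟩
            exact hY.trans (Beq.cons c (Beq.cons a' (h5a.trans h5b.symm)))
          · -- Far a' b (B2b)
            simp only [w_far hfab, List.cons_append, List.nil_append] at hcX ⊢
            simp only [w_far hfab.symm, List.cons_append, List.nil_append] at hT ⊢
            obtain ⟨Z₃, hX2, hZ2⟩ := IH' (by omega) hcX
            simp only [w_adj hacb] at hX2
            simp only [w_adj hacb.symm] at hZ2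
            simp only [List.cons_append, List.nil_append] at hX2 hZ2
            have hlZ₁ : Z₁.length = X''.length := by
              have := hE.length_eq; simp at this; omega
            obtain ⟨Z₄', hZ1, hZ2'⟩ := IH' (by omega) hT
            simp only [w_adj hadc.symm] at hZ1
            simp only [w_adj hadc] at hZ2'
            simp only [List.cons_append, List.nil_append] at hZ1 hZ2'
            have hmid : Beq (c :: b :: Z₃) (c :: a' :: Z₄') := hZ2.symm.trans hZ2'
            obtain ⟨Z₆, e1, e2⟩ := IH' (by
              have h1 := hcX.length_eq; have h2 := hZ2.length_eq
              simp only [List.length_cons] at h1 h2 ⊢; omega) hmid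
            simp only [w_self, List.nil_append] at e1 e2
            have hba : Beq (b :: Z₃) (a' :: Z₄') := e1.trans e2.symm
            obtain ⟨Z₅, hZ3, hZ4⟩ := IH' (by
              have h1 := hcX.length_eq; have h2 := hZ2.length_eq
              simp only [List.length_cons] at h1 h2 ⊢; omega) hba
            simp only [w_far hfab.symm, List.cons_append, List.nil_append] at hZ3
            simp only [w_far hfab, List.cons_append, List.nil_append] at hZ4
            refine ⟨c :: b :: a' :: c :: Z₅, ?_, ?_⟩
            · -- c a' X'' ≈ c a' b c a' Z₅ ≈ b c b a' c Z₅
              refine ((Beq.cons c (Beq.cons a' hX2)).trans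
                (Beq.cons c (Beq.cons a' (Beq.cons b (Beq.cons c hZ3))))).trans ?_
              -- [c,a',b,c,a'] → [c,b,a',c,a'] → [c,b,c,a',c] → [b,c,b,a',c]
              refine (Beq.cons c (beq_swap hfab (c :: a' :: Z₅))).trans ?_
              refine (Beq.cons c (Beq.cons b (beq_braid hadc Z₅))).trans ?_
              exact beq_braid hacb (a' :: c :: Z₅)
            · -- Y ≈ c b a' c b Z₅ ≈ a' c b a' c Z₅
              refine ((hY.trans (Beq.cons c (Beq.cons b hZ1))).trans
                (Beq.cons c (Beq.cons b (Beq.cons a' (Beq.cons c hZ4))))).trans ?_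
              -- [c,b,a',c,b] → [c,a',b,c,b] → [c,a',c,b,c] → [a',c,a',b,c] → [a',c,b,a',c]
              refine (Beq.cons c (beq_swap hfab.symm (c :: b :: Z₅))).trans ?_
              refine (Beq.cons c (Beq.cons a' (beq_braid hacb.symm Z₅))).trans ?_
              refine (beq_braid hadc.symm (b :: c :: Z₅)).trans ?_
              exact Beq.cons a' (Beq.cons c (beq_swap hfab (c :: Z₅)))
          · -- Adj a' b with Adj a' c and Adj c b : impossible
            exact (adj_triple haab hadc hacb).elim
  exact main _ hch a X rfl hlen


theorem beq_cons_cancel {a : Fin m} {X Y : List (Fin m)} (h : Beq (a :: X) (a :: Y)) :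
    Beq X Y := by
  obtain ⟨Z, h1, h2⟩ := key X.length X Y a a le_rfl h
  simp only [w_self, List.nil_append] at h1 h2
  exact h1.trans h2.symm

theorem beq_append_cancel_left {X Y : List (Fin m)} (S : List (Fin m))
    (h : Beq (S ++ X) (S ++ Y)) : Beq X Y := by
  induction S with
  | nil => simpa using h
  | cons a S ihS => exact ihS (beq_cons_cancel (by simpa using h))

theorem Step.reverse {X Y : List (Fin m)} (h : Step X Y) : Step X.reverse Y.reverse := by
  rcases h with ⟨s, t, i, j, hf, hu, hv⟩ | ⟨s, t, i, j, ha, hu, hv⟩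
  · refine .inl ⟨t.reverse, s.reverse, j, i, hf.symm, ?_, ?_⟩ <;> subst hu hv <;> simp
  · refine .inr ⟨t.reverse, s.reverse, i, j, ha, ?_, ?_⟩ <;> subst hu hv <;> simp

theorem Beq.reverse {X Y : List (Fin m)} (h : Beq X Y) : Beq X.reverse Y.reverse :=
  Relation.ReflTransGen.lift List.reverse (fun a b (hs : Step a b) => hs.reverse) _ _ h

theorem beq_append_cancel_right {X Y : List (Fin m)} (S : List (Fin m))
    (h : Beq (X ++ S) (Y ++ S)) : Beq X Y := by
  have := beq_append_cancel_left S.reverse (by simpa using h.reverse)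
  simpa using this.reverse

theorem bm_mul_left_cancel (u x y : BM m) (h : u * x = u * y) : x = y := by
  obtain ⟨S, rfl⟩ := mkw_surjective u
  obtain ⟨X, rfl⟩ := mkw_surjective x
  obtain ⟨Y, rfl⟩ := mkw_surjective y
  rw [← mkw_append, ← mkw_append, mkw_eq_iff] at h
  exact mkw_eq_of_beq (beq_append_cancel_left S h)

theorem bm_mul_right_cancel (u x y : BM m) (h : x * u = y * u) : x = y := by
  obtain ⟨S, rfl⟩ := mkw_surjective u
  obtain ⟨X, rfl⟩ := mkw_surjective x
  obtain ⟨Y, rfl⟩ := mkw_surjective y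
  rw [← mkw_append, ← mkw_append, mkw_eq_iff] at h
  exact mkw_eq_of_beq (beq_append_cancel_right S h)

/-- the reversal anti-automorphism, as a function -/
def revBM (x : BM m) : BM m := by
  refine Quotient.lift (fun l : FreeMonoid (Fin m) => mkw (FreeMonoid.toList l).reverse) ?_ x
  intro l1 l2 hr
  exact mkw_eq_of_beq (Beq.reverse ((congen_iff_beq _ _).mp hr))

theorem revBM_mkw (l : List (Fin m)) : revBM (mkw l) = mkw l.reverse := rfl

theorem revBM_mul (x y : BM m) : revBM (x * y) = revBM y * revBM x := by
  obtain ⟨X, rfl⟩ := mkw_surjective x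
  obtain ⟨Y, rfl⟩ := mkw_surjective y
  rw [← mkw_append, revBM_mkw, revBM_mkw, revBM_mkw, ← mkw_append, List.reverse_append]

theorem revBM_revBM (x : BM m) : revBM (revBM x) = x := by
  obtain ⟨X, rfl⟩ := mkw_surjective x
  rw [revBM_mkw, revBM_mkw, List.reverse_reverse]

theorem revBM_pow (x : BM m) (k : ℕ) : revBM (x ^ k) = revBM x ^ k := by
  induction k with
  | zero => simp [pow_zero]; rfl
  | succ k ih => rw [pow_succ, revBM_mul, ih, pow_succ']

/-- word length descends to the monoid -/
def lnBM : BM m →* Multiplicative ℕ :=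
  PresentedMonoid.lift (fun _ => Multiplicative.ofAdd 1) (by
    rintro a b (⟨i, j, _, rfl, rfl⟩ | ⟨i, j, _, rfl, rfl⟩) <;> simp [map_mul])

def ln (x : BM m) : ℕ := Multiplicative.toAdd (lnBM x)

theorem ln_mul (x y : BM m) : ln (x * y) = ln x + ln y := by
  unfold ln; rw [map_mul]; rfl

theorem ln_one : ln (1 : BM m) = 0 := by
  unfold ln; rw [map_one]; rfl

theorem ln_mkw (l : List (Fin m)) : ln (mkw l) = l.length := by
  induction l with
  | nil => exact ln_one
  | cons a l ih =>
    have : (a :: l) = [a] ++ l := rfl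
    rw [this, mkw_append, ln_mul, ih]
    have : ln (mkw [a]) = 1 := rfl
    rw [this]
    simp [Nat.add_comm]

theorem ln_rev (x : BM m) : ln (revBM x) = ln x := by
  obtain ⟨X, rfl⟩ := mkw_surjective x
  rw [revBM_mkw, ln_mkw, ln_mkw, List.length_reverse]


/-- single generator -/
def sg (a : Fin m) : BM m := mkw [a]

theorem mkw_cons (a : Fin m) (l : List (Fin m)) : mkw (a :: l) = sg a * mkw l := by
  have : (a :: l) = [a] ++ l := rfl
  rw [this, mkw_append]; rfl

/-- generator with a natural number index, 1 outside range -/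
def gen (m : ℕ) (i : ℕ) : BM m := if h : i < m then sg ⟨i, h⟩ else 1

theorem gen_lt {i : ℕ} (h : i < m) : gen m i = sg ⟨i, h⟩ := dif_pos h

theorem sg_comm {a b : Fin m} (h : Far a b) : sg a * sg b = sg b * sg a := by
  show mkw [a] * mkw [b] = mkw [b] * mkw [a]
  rw [← mkw_append, ← mkw_append]
  exact mkw_eq_of_beq (beq_swap h [])

theorem sg_braid {a b : Fin m} (h : Adj a b) : sg a * sg b * sg a = sg b * sg a * sg b := by
  show mkw [a] * mkw [b] * mkw [a] = mkw [b] * mkw [a] * mkw [b]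
  rw [← mkw_append, ← mkw_append, ← mkw_append, ← mkw_append]
  exact mkw_eq_of_beq (beq_braid h [])

theorem gen_comm {i j : ℕ} (h : i + 2 ≤ j) : gen m i * gen m j = gen m j * gen m i := by
  by_cases hi : i < m
  · by_cases hj : j < m
    · rw [gen_lt hi, gen_lt hj]; exact sg_comm (Or.inl (by show i + 1 < j; omega))
    · rw [gen_lt hi]; rw [gen, dif_neg hj, mul_one, one_mul]
  · rw [gen, dif_neg hi, mul_one, one_mul]

theorem gen_braid {i : ℕ} (h : i + 1 < m) : 
    gen m i * gen m (i+1) * gen m i = gen m (i+1) * gen m i * gen m (i+1) := by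
  rw [gen_lt (by omega : i < m), gen_lt h]
  exact sg_braid (Or.inl rfl)

/-- the word Π_t -/
def pi (m t : ℕ) : BM m := ((List.range t).map fun k => gen m k).prod

/-- the shifted word σ_1 ⋯ σ_s -/
def sh (m s : ℕ) : BM m := ((List.range s).map fun k => gen m (k+1)).prod

theorem pi_zero : pi m 0 = 1 := rfl
theorem sh_zero : sh m 0 = 1 := rfl

theorem pi_succ (t : ℕ) : pi m (t+1) = pi m t * gen m t := by
  unfold pi; rw [List.range_succ]; simp

theorem sh_succ (s : ℕ) : sh m (s+1) = sh m s * gen m (s+1) := by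
  unfold sh; rw [List.range_succ]; simp

theorem pi_eq_gen_sh (t : ℕ) : pi m (t+1) = gen m 0 * sh m t := by
  unfold pi sh
  rw [List.range_succ_eq_map]
  simp [List.map_map, Function.comp_def]

theorem gen_comm_pi {s j : ℕ} (h : s + 1 ≤ j) : gen m j * pi m s = pi m s * gen m j := by
  induction s with
  | zero => rw [pi_zero, one_mul, mul_one]
  | succ s ih =>
    rw [pi_succ, ← mul_assoc, ih (by omega), mul_assoc, mul_assoc, 
      ← gen_comm (by omega : s + 2 ≤ j)]

theorem pi_gen : ∀ t i : ℕ, i + 2 ≤ t → t ≤ m → 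
    pi m t * gen m i = gen m (i+1) * pi m t := by
  intro t
  induction t with
  | zero => intro i h _; omega
  | succ s ih =>
    intro i h hm
    rcases Nat.lt_or_ge (i+2) (s+1) with hlt | hge
    · -- i + 2 ≤ s
      rw [pi_succ, mul_assoc, ← gen_comm (by omega : i + 2 ≤ s), ← mul_assoc,
        ih i (by omega) (by omega), mul_assoc]
    · -- i + 2 = s + 1, i.e. s = i + 1
      have hs : s = i + 1 := by omega
      subst hs
      have hb : gen m i * (gen m (i+1) * gen m i) = gen m (i+1) * (gen m i * gen m (i+1)) := by
        rw [← mul_assoc, gen_braid (by omega : i + 1 < m), mul_assoc]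
      rw [pi_succ, pi_succ]
      simp only [mul_assoc]
      rw [hb, ← mul_assoc, ← gen_comm_pi (le_refl (i+1))]
      simp only [mul_assoc]

theorem pi_pi : ∀ s t : ℕ, s + 1 ≤ t → t ≤ m → 
    pi m t * pi m s = sh m s * pi m t := by
  intro s
  induction s with
  | zero => intro t _ _; rw [pi_zero, sh_zero, mul_one, one_mul]
  | succ s ih =>
    intro t h hm
    rw [pi_succ, sh_succ, ← mul_assoc, ih t (by omega) hm, mul_assoc, 
      pi_gen t s (by omega) hm, ← mul_assoc]

theorem pi_pi_self {t : ℕ} (h1 : 1 ≤ t) (hm : t ≤ m) :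
    pi m t * pi m t = gen m 0 * (pi m t * pi m (t-1)) := by
  obtain ⟨s, rfl⟩ : ∃ s, t = s + 1 := ⟨t - 1, by omega⟩
  show pi m (s+1) * pi m (s+1) = gen m 0 * (pi m (s+1) * pi m s)
  rw [pi_pi s (s+1) (by omega) hm, ← mul_assoc, ← pi_eq_gen_sh]

/-- the partial Garside elements: dd t = Π_t Π_{t-1} ⋯ Π_1 -/
def dd (m : ℕ) : ℕ → BM m
  | 0 => 1
  | t+1 => pi m (t+1) * dd m t

theorem gen_comm_dd : ∀ (s j : ℕ), s + 1 ≤ j → gen m j * dd m s = dd m s * gen m j := by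
  intro s
  induction s with
  | zero => intro j _; show gen m j * 1 = 1 * gen m j; rw [mul_one, one_mul]
  | succ s ih =>
    intro j h
    show gen m j * (pi m (s+1) * dd m s) = (pi m (s+1) * dd m s) * gen m j
    rw [← mul_assoc, gen_comm_pi (by omega), mul_assoc, ih j (by omega), mul_assoc]

theorem pi_one : pi m 1 = gen m 0 := by
  have : pi m 1 = pi m 0 * gen m 0 := pi_succ 0
  rw [this, pi_zero, one_mul]

theorem dd_flip : ∀ t, t ≤ m → ∀ i, i < t → 
    dd m t * gen m i = gen m (t-1-i) * dd m t := by
  intro t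
  induction t with
  | zero => intro _ i h; omega
  | succ s ih =>
    intro hm i hi
    rcases Nat.lt_or_ge i s with hlt | hge
    · -- i < s
      show (pi m (s+1) * dd m s) * gen m i = gen m (s+1-1-i) * (pi m (s+1) * dd m s)
      rw [mul_assoc, ih (by omega) i hlt, ← mul_assoc,
        pi_gen (s+1) (s-1-i) (by omega) hm, mul_assoc,
        show s - 1 - i + 1 = s + 1 - 1 - i from by omega]
    · -- i = s
      obtain rfl : i = s := by omega
      rw [show i + 1 - 1 - i = 0 from by omega]
      rcases Nat.eq_zero_or_pos i with rfl | hpos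
      · show dd m 1 * gen m 0 = gen m 0 * dd m 1
        have h1 : dd m 1 = gen m 0 := by
          show pi m 1 * dd m 0 = gen m 0
          show pi m 1 * 1 = gen m 0
          rw [mul_one, pi_one]
        rw [h1]
      · obtain ⟨s', rfl⟩ : ∃ s', i = s' + 1 := ⟨i - 1, by omega⟩
        show dd m (s'+2) * gen m (s'+1) = gen m 0 * dd m (s'+2)
        have e1 : dd m (s'+2) = pi m (s'+2) * (pi m (s'+1) * dd m s') := rfl
        rw [e1]
        calc pi m (s'+2) * (pi m (s'+1) * dd m s') * gen m (s'+1)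
            = pi m (s'+2) * pi m (s'+1) * (dd m s' * gen m (s'+1)) := by
              simp only [mul_assoc]
          _ = pi m (s'+2) * pi m (s'+1) * (gen m (s'+1) * dd m s') := by
              rw [← gen_comm_dd s' (s'+1) (by omega)]
          _ = (pi m (s'+2) * (pi m (s'+1) * gen m (s'+1))) * dd m s' := by
              simp only [mul_assoc]
          _ = (pi m (s'+2) * pi m (s'+2)) * dd m s' := by rw [← pi_succ]
          _ = (gen m 0 * (pi m (s'+2) * pi m (s'+1))) * dd m s' := by
              rw [pi_pi_self (by omega) (by omega : s' + 2 ≤ m),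
                show s' + 2 - 1 = s' + 1 from by omega]
          _ = gen m 0 * (pi m (s'+2) * (pi m (s'+1) * dd m s')) := by
              simp only [mul_assoc]


theorem dd_div : ∀ t, t ≤ m → ∀ i, i < t → ∃ D, dd m t = gen m i * D := by
  intro t
  induction t with
  | zero => intro _ i h; omega
  | succ s ih =>
    intro hm i hi
    rcases Nat.eq_zero_or_pos i with rfl | hpos
    · refine ⟨sh m s * dd m s, ?_⟩
      show pi m (s+1) * dd m s = gen m 0 * (sh m s * dd m s)
      rw [pi_eq_gen_sh, mul_assoc]
    · obtain ⟨i', rfl⟩ : ∃ i', i = i' + 1 := ⟨i - 1, by omega⟩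
      obtain ⟨D', hD'⟩ := ih (by omega) i' (by omega)
      refine ⟨pi m (s+1) * D', ?_⟩
      show pi m (s+1) * dd m s = gen m (i'+1) * (pi m (s+1) * D')
      rw [hD', ← mul_assoc, pi_gen (s+1) i' (by omega) hm, mul_assoc]

/-- the flip automorphism -/
def phi : BM m →* BM m :=
  PresentedMonoid.lift (fun i : Fin m => sg i.rev) (by
    rintro a b (⟨i, j, hij, rfl, rfl⟩ | ⟨i, j, hij, rfl, rfl⟩)
    · simp only [map_mul]
      show sg i.rev * sg j.rev = sg j.rev * sg i.rev
      refine sg_comm (Or.inr ?_)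
      have hi := i.isLt; have hj := j.isLt
      simp only [Fin.val_rev]
      omega
    · simp only [map_mul]
      show sg i.rev * sg j.rev * sg i.rev = sg j.rev * sg i.rev * sg j.rev
      refine sg_braid (Or.inr ?_)
      have hi := i.isLt; have hj := j.isLt
      simp only [Fin.val_rev]
      omega)

theorem phi_sg (a : Fin m) : phi (sg a) = sg a.rev := rfl

theorem phi_phi (x : BM m) : phi (phi x) = x := by
  have : (phi (m := m)).comp phi = MonoidHom.id _ := by
    apply PresentedMonoid.ext
    intro a
    show phi (phi (sg a)) = sg a
    rw [phi_sg, phi_sg, Fin.rev_rev]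
  exact DFunLike.congr_fun this x

theorem delta_gen_flip (a : Fin m) : dd m m * sg a = sg a.rev * dd m m := by
  have h := dd_flip m le_rfl a.val a.isLt
  rw [gen_lt a.isLt] at h
  have h2 : m - 1 - a.val < m := by have := a.isLt; omega
  rw [gen_lt h2] at h
  have : (⟨m - 1 - a.val, h2⟩ : Fin m) = a.rev := by
    ext; simp [Fin.val_rev]; omega
  rw [this] at h
  exact h

theorem delta_phi (x : BM m) : dd m m * x = phi x * dd m m := by
  obtain ⟨l, rfl⟩ := mkw_surjective x
  induction l with
  | nil => show dd m m * 1 = phi 1 * dd m m; rw [mul_one, map_one, one_mul]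
  | cons a l ih =>
    rw [mkw_cons, map_mul, ← mul_assoc, delta_gen_flip, phi_sg, mul_assoc, ih, ← mul_assoc]

theorem phi_delta (x : BM m) : x * dd m m = dd m m * phi x := by
  have := delta_phi (phi x)
  rw [phi_phi] at this
  exact this.symm

theorem x_delta_pow (x : BM m) (k : ℕ) : x * dd m m ^ k = dd m m ^ k * (phi^[k] x) := by
  induction k generalizing x with
  | zero => simp
  | succ k ih =>
    rw [pow_succ', ← mul_assoc, phi_delta x, mul_assoc, ih (phi x), ← mul_assoc,
      ← pow_succ', Function.iterate_succ_apply]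

theorem ln_phi (x : BM m) : ln (phi x) = ln x := by
  obtain ⟨l, rfl⟩ := mkw_surjective x
  induction l with
  | nil => rw [show mkw ([] : List (Fin m)) = 1 from rfl, map_one]
  | cons a l ih =>
    rw [mkw_cons, map_mul, ln_mul, ln_mul, ih, phi_sg]
    rfl

/-- right common multiple: every x divides a power of Δ -/
theorem rcm (x : BM m) : ∀ k, ln x ≤ k → ∃ b, x * b = dd m m ^ k := by
  obtain ⟨l, rfl⟩ := mkw_surjective x
  suffices h : ∃ b, mkw l * b = dd m m ^ l.length by
    intro k hk
    obtain ⟨b, hb⟩ := h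
    rw [ln_mkw] at hk
    refine ⟨b * dd m m ^ (k - l.length), ?_⟩
    rw [← mul_assoc, hb, ← pow_add]
    congr 1
    omega
  induction l with
  | nil => exact ⟨1, by simp; rfl⟩
  | cons a l ih =>
    obtain ⟨b, hb⟩ := ih
    by_cases hm : m = 0
    · exact absurd a.isLt (by omega)
    obtain ⟨D, hD⟩ := dd_div m le_rfl a.val a.isLt
    rw [gen_lt a.isLt, Fin.eta] at hD
    refine ⟨b * phi^[l.length] D, ?_⟩
    rw [mkw_cons]
    calc sg a * mkw l * (b * phi^[l.length] D) 
        = sg a * (mkw l * b) * phi^[l.length] D := by simp only [mul_assoc]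
      _ = sg a * dd m m ^ l.length * phi^[l.length] D := by rw [hb]
      _ = sg a * (D * dd m m ^ l.length) := by 
          rw [x_delta_pow D l.length]; simp only [mul_assoc]
      _ = (sg a * D) * dd m m ^ l.length := by simp only [mul_assoc]
      _ = dd m m * dd m m ^ l.length := by rw [← hD]
      _ = dd m m ^ (a :: l).length := by 
          rw [← pow_succ']; rfl

/-- left common multiple -/
theorem lcm (x : BM m) : ∀ k, ln x ≤ k → ∃ b, b * x = revBM (dd m m) ^ k := by
  intro k hk
  obtain ⟨b, hb⟩ := rcm (revBM x) k (by rwa [ln_rev])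
  refine ⟨revBM b, ?_⟩
  have := congrArg revBM hb
  rw [revBM_mul, revBM_revBM, revBM_pow] at this
  exact this

theorem ore_common (r s : BM m) : ∃ (v u : BM m), u * r = v * s := by
  obtain ⟨u, hu⟩ := lcm r (max (ln r) (ln s)) (le_max_left _ _)
  obtain ⟨v, hv⟩ := lcm s (max (ln r) (ln s)) (le_max_right _ _)
  exact ⟨v, u, by rw [hu, hv]⟩


/-- dd as the product defining garsideDelta -/
theorem dd_prod : ∀ t, ((List.range t).map fun k => pi m (t - k)).prod = dd m t := by
  intro t
  induction t with
  | zero => rfl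
  | succ t ih =>
    rw [List.range_succ_eq_map, List.map_cons, List.map_map, List.prod_cons]
    show pi m (t + 1) * _ = pi m (t+1) * dd m t
    congr 1
    rw [← ih]
    congr 1
    apply List.map_congr_left
    intro k _
    show pi m (t + 1 - (k + 1)) = pi m (t - k)
    congr 1
    omega

theorem ln_dd_pos (hm : 0 < m) : 0 < ln (dd m m) := by
  obtain ⟨D, hD⟩ := dd_div m le_rfl 0 hm
  rw [hD, gen_lt hm, ln_mul]
  have : ln (sg (⟨0, hm⟩ : Fin m)) = 1 := by
    show ln (mkw [⟨0, hm⟩]) = 1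
    rw [ln_mkw]
    rfl
  omega

end Gar


namespace GarN
open Gar

variable {n : ℕ}

theorem sp_eq_sg (i : Fin (n - 1)) : σp i = Gar.sg i := rfl

theorem garsidePi_eq (t : ℕ) : garsidePi (n := n) t = Gar.pi (n - 1) t := rfl

theorem garsideDelta_eq : garsideDelta n = Gar.dd (n - 1) (n - 1) := by
  rw [← Gar.dd_prod]
  rfl

theorem mk_rel_one {r : FreeGroup (Fin (n - 1))} (hr : r ∈ braidRels (n - 1)) :
    PresentedGroup.mk (braidRels (n - 1)) r = 1 := by
  have h2 : r ∈ Subgroup.normalClosure (braidRels (n - 1)) := Subgroup.subset_normalClosure hr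
  exact (QuotientGroup.eq_one_iff r).mpr h2

theorem sigma_comm {i j : Fin (n - 1)} (h : (i : ℕ) + 1 < j) :
    σ i * σ j = σ j * σ i := by
  have h1 : PresentedGroup.mk (braidRels (n - 1))
      (FreeGroup.of i * FreeGroup.of j * (FreeGroup.of i)⁻¹ * (FreeGroup.of j)⁻¹) = 1 :=
    mk_rel_one (Or.inl ⟨i, j, h, rfl⟩)
  simp only [map_mul, map_inv] at h1
  have := commutatorElement_eq_one_iff_commute.mp (by
    show σ i * σ j * (σ i)⁻¹ * (σ j)⁻¹ = 1
    exact h1)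
  exact this.eq

theorem sigma_braid {i j : Fin (n - 1)} (h : (i : ℕ) + 1 = j) :
    σ (n := n) i * σ j * σ i = σ j * σ i * σ j := by
  have h1 : PresentedGroup.mk (braidRels (n - 1))
      (FreeGroup.of i * FreeGroup.of j * FreeGroup.of i *
        (FreeGroup.of j * FreeGroup.of i * FreeGroup.of j)⁻¹) = 1 :=
    mk_rel_one (Or.inr ⟨i, j, h, rfl⟩)
  simp only [map_mul, map_inv] at h1
  have h2 : (σ (n:=n) i * σ j * σ i) * (σ j * σ i * σ j)⁻¹ = 1 := by
    exact h1
  exact mul_inv_eq_one.mp h2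

/-- the canonical homomorphism ι -/
def iota : BraidMonoid n →* BraidGroup n :=
  PresentedMonoid.lift (fun i : Fin (n - 1) => σ i) (by
    rintro a b (⟨i, j, hij, rfl, rfl⟩ | ⟨i, j, hij, rfl, rfl⟩) <;>
      simp only [map_mul, FreeMonoid.lift_eval_of]
    · exact sigma_comm hij
    · exact sigma_braid hij)

theorem iota_sp (i : Fin (n - 1)) : iota (σp i) = σ i := rfl

section Ore

noncomputable instance oreSetTop : OreLocalization.OreSet (⊤ : Submonoid (BM (n - 1))) where
  ore_right_cancel := fun r₁ r₂ s h => ⟨1, by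
    rw [Gar.bm_mul_right_cancel (↑s) r₁ r₂ h]⟩
  oreNum := fun r s => (Gar.ore_common r ↑s).choose
  oreDenom := fun r s => ⟨(Gar.ore_common r ↑s).choose_spec.choose, trivial⟩
  ore_eq := fun r s => (Gar.ore_common r ↑s).choose_spec.choose_spec

abbrev OL (n : ℕ) := OreLocalization (⊤ : Submonoid (BM (n - 1))) (BM (n - 1))

theorem numeratorHom_inj :
    Function.Injective (OreLocalization.numeratorHom : BM (n - 1) →* OL n) := by
  intro r₁ r₂ h
  rw [OreLocalization.numeratorHom_apply, OreLocalization.numeratorHom_apply,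
    OreLocalization.oreDiv_eq_iff] at h
  obtain ⟨u, v, h1, h2⟩ := h
  have huv : (u : BM (n - 1)) = v := by simpa using h2
  rw [Submonoid.smul_def, smul_eq_mul, smul_eq_mul, ← huv] at h1
  exact (Gar.bm_mul_left_cancel _ _ _ h1).symm

/-- each generator as a unit of the Ore localization -/
noncomputable def sgU (a : Fin (n - 1)) : (OL n)ˣ :=
  OreLocalization.numeratorUnit (⟨Gar.sg a, trivial⟩ : (⊤ : Submonoid (BM (n - 1))))

theorem sgU_val (a : Fin (n - 1)) :
    (sgU (n := n) a : OL n) = OreLocalization.numeratorHom (Gar.sg a) := rfl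

noncomputable def jhom : BraidGroup n →* (OL n)ˣ :=
  PresentedGroup.toGroup (f := fun i => sgU i) (by
    rintro r (⟨i, j, hij, rfl⟩ | ⟨i, j, hij, rfl⟩) <;>
      simp only [map_mul, map_inv, FreeGroup.lift_apply_of]
    · have hb : sgU (n := n) i * sgU j = sgU j * sgU i := by
        apply Units.ext
        simp only [Units.val_mul, sgU_val, ← map_mul]
        exact congrArg _ (Gar.sg_comm (Or.inl hij))
      simp [hb]
    · have hb : sgU (n := n) i * sgU j * sgU i = sgU j * sgU i * sgU j := by
        apply Units.ext
        simp only [Units.val_mul, sgU_val, ← map_mul]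
        exact congrArg _ (Gar.sg_braid (Or.inl hij))
      simp only [← hb, mul_inv_rev]
      group)

end Ore


theorem iota_inj : Function.Injective (iota (n := n)) := by
  have hJ : (Units.coeHom (OL n)).comp ((jhom (n := n)).comp (iota (n := n))) =
      (OreLocalization.numeratorHom : BM (n - 1) →* OL n) := by
    apply PresentedMonoid.ext
    intro a
    have h1 : jhom (n := n) (σ a) = sgU a := PresentedGroup.toGroup.of _
    show ((jhom (iota (PresentedMonoid.of (braidMonoidRels (n - 1)) a))) : OL n) =
      OreLocalization.numeratorHom (PresentedMonoid.of (braidMonoidRels (n - 1)) a)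
    rw [show iota (PresentedMonoid.of (braidMonoidRels (n - 1)) a) = σ a from rfl, h1]
    rfl
  intro x y h
  apply numeratorHom_inj (n := n)
  rw [← hJ]
  simp only [MonoidHom.comp_apply, h]

section WithDelta
variable (n)

noncomputable def DD : BraidGroup n := iota (garsideDelta n)

variable {n}

theorem sl1 (x : BraidMonoid n) : iota x * DD n = DD n * iota (Gar.phi x) := by
  have h := Gar.phi_delta x
  rw [← garsideDelta_eq] at h
  have := congrArg (iota (n := n)) h
  simp only [map_mul] at this
  exact this

theorem sl2 (x : BraidMonoid n) : iota x * (DD n)⁻¹ = (DD n)⁻¹ * iota (Gar.phi x) := by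
  have h := sl1 (n := n) (Gar.phi x)
  rw [Gar.phi_phi] at h
  have h2 := congrArg (fun g => (DD n)⁻¹ * g * (DD n)⁻¹) h
  have e1 : (DD n)⁻¹ * (iota (Gar.phi x) * DD n) * (DD n)⁻¹ =
      (DD n)⁻¹ * iota (Gar.phi x) := by group
  have e2 : (DD n)⁻¹ * (DD n * iota x) * (DD n)⁻¹ = iota x * (DD n)⁻¹ := by group
  rw [e1, e2] at h2
  exact h2.symm

theorem slide_zpow (z : ℤ) (x : BraidMonoid n) :
    ∃ y, iota x * DD n ^ z = DD n ^ z * iota y := by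
  induction z using Int.induction_on generalizing x with
  | zero => exact ⟨x, by simp⟩
  | succ k ih =>
    obtain ⟨y, hy⟩ := ih x
    refine ⟨Gar.phi y, ?_⟩
    rw [zpow_add_one, ← mul_assoc, hy, mul_assoc, sl1 y, ← mul_assoc]
  | pred k ih =>
    obtain ⟨y, hy⟩ := ih x
    refine ⟨Gar.phi y, ?_⟩
    rw [zpow_sub_one, ← mul_assoc, hy, mul_assoc, sl2 y, ← mul_assoc]

theorem sigma_inv (x : Fin (n - 1)) :
    (σ x)⁻¹ = DD n ^ (-1 : ℤ) * iota (Gar.phi ((Gar.dd_div (n-1) le_rfl x.val x.isLt).choose)) := by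
  set E := (Gar.dd_div (n-1) le_rfl x.val x.isLt).choose with hE
  have hdd : Gar.dd (n-1) (n-1) = Gar.gen (n-1) x.val * E :=
    (Gar.dd_div (n-1) le_rfl x.val x.isLt).choose_spec
  rw [Gar.gen_lt x.isLt, Fin.eta] at hdd
  have hD : DD n = σ x * iota E := by
    rw [DD, garsideDelta_eq, hdd, map_mul]
    rfl
  have h1 : (σ x)⁻¹ = iota E * (DD n)⁻¹ := by
    rw [hD]; group
  rw [h1, sl2, zpow_neg_one]

theorem exist_raw (w : BraidGroup n) :
    ∃ (z : ℤ) (a : BraidMonoid n), w = DD n ^ z * iota a := by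
  induction w using PresentedGroup.induction_on with
  | _ g =>
  induction g using FreeGroup.induction_on with
  | C1 => exact ⟨0, 1, by simp⟩
  | of x => exact ⟨0, σp x, by simp [iota_sp]; rfl⟩
  | inv_of x _ =>
    refine ⟨-1, Gar.phi ((Gar.dd_div (n-1) le_rfl x.val x.isLt).choose), ?_⟩
    rw [map_inv]
    show (σ x)⁻¹ = _
    rw [sigma_inv]
  | mul g h hg hh =>
    obtain ⟨z1, a1, ha1⟩ := hg
    obtain ⟨z2, a2, ha2⟩ := hh
    obtain ⟨y, hy⟩ := slide_zpow z2 a1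
    refine ⟨z1 + z2, y * a2, ?_⟩
    rw [map_mul, ha1, ha2, map_mul]
    calc DD n ^ z1 * iota a1 * (DD n ^ z2 * iota a2)
        = DD n ^ z1 * (iota a1 * DD n ^ z2) * iota a2 := by group
      _ = DD n ^ z1 * (DD n ^ z2 * iota y) * iota a2 := by rw [hy]
      _ = DD n ^ (z1 + z2) * (iota y * iota a2) := by rw [zpow_add]; group

theorem ln_delta_pos (hn : 2 ≤ n) : 0 < Gar.ln (garsideDelta n) := by
  rw [garsideDelta_eq]
  exact Gar.ln_dd_pos (by omega)

theorem prime_reduce (hn : 2 ≤ n) (a : BraidMonoid n) :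
    ∃ (k : ℕ) (b : BraidMonoid n), PrimeToDelta b ∧ iota a = DD n ^ (k : ℤ) * iota b := by
  suffices H : ∀ (N : ℕ) (a : BraidMonoid n), Gar.ln a ≤ N →
      ∃ (k : ℕ) (b : BraidMonoid n), PrimeToDelta b ∧ iota a = DD n ^ (k : ℤ) * iota b from
    H (Gar.ln a) a le_rfl
  intro N
  induction N using Nat.strong_induction_on with
  | _ N IH =>
  intro a ha
  by_cases hp : PrimeToDelta a
  · exact ⟨0, a, hp, by simp⟩
  · rw [PrimeToDelta, not_not] at hp
    obtain ⟨U, V, rfl⟩ := hp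
    have hlb : Gar.ln (Gar.phi U * V) < N := by
      have h1 := Gar.ln_mul (U * garsideDelta n) V
      have h2 := Gar.ln_mul U (garsideDelta n)
      have h3 := Gar.ln_mul (Gar.phi U) V
      have h4 := Gar.ln_phi U
      have h5 := ln_delta_pos hn
      omega
    obtain ⟨k, b, hb, hab⟩ := IH (Gar.ln (Gar.phi U * V)) hlb (Gar.phi U * V) le_rfl
    refine ⟨k + 1, b, hb, ?_⟩
    have key : iota (U * garsideDelta n * V) = DD n * iota (Gar.phi U * V) := by
      simp only [map_mul]
      show iota U * DD n * iota V = DD n * (iota (Gar.phi U) * iota V)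
      rw [sl1 U, mul_assoc]
    rw [key, hab, ← mul_assoc, ← zpow_one_add]
    norm_num
    congr 1
    omega

theorem uniq_aux (z₁ z₂ : ℤ) (b₁ b₂ : BraidMonoid n)
    (h1 : PrimeToDelta b₁) (h2 : PrimeToDelta b₂) (hz : z₂ ≤ z₁)
    (heq : DD n ^ z₁ * iota b₁ = DD n ^ z₂ * iota b₂) : z₁ = z₂ ∧ b₁ = b₂ := by
  obtain ⟨k, hk⟩ : ∃ k : ℕ, z₁ - z₂ = (k : ℤ) := ⟨(z₁ - z₂).toNat, by omega⟩
  have heq2 : DD n ^ ((k : ℤ)) * iota b₁ = iota b₂ := by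
    have := congrArg (fun g => (DD n ^ z₂)⁻¹ * g) heq
    rw [← mul_assoc, ← mul_assoc, ← zpow_neg, ← zpow_add, ← zpow_add,
      neg_add_cancel, zpow_zero, one_mul] at this
    rw [show -z₂ + z₁ = (k:ℤ) from by omega] at this
    exact this
  rw [show DD n = iota (garsideDelta n) from rfl, zpow_natCast, ← map_pow, ← map_mul] at heq2
  have hbb : garsideDelta n ^ k * b₁ = b₂ := iota_inj heq2
  rcases k with _ | k'
  · constructor
    · omega
    · simpa using hbb
  · exfalso
    apply h2
    refine ⟨1, garsideDelta n ^ k' * b₁, ?_⟩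
    rw [one_mul, ← hbb, pow_succ', mul_assoc]

end WithDelta

end GarN

/-- **Garside normal form.** Let `ι : Br_n⁺ → Br_n` be the canonical homomorphism and `Δ`
Garside's fundamental word.  Every element `w` of the braid group `Br_n` can be written
as `w = ι(Δ)^m · ι(A)` for a unique integer `m` and a unique positive braid `A` prime
to `Δ`. -/
theorem garside_normal_form (n : ℕ) (hn : 2 ≤ n) :
    ∃ ι : BraidMonoid n →* BraidGroup n,
      (∀ i : Fin (n - 1), ι (σp i) = σ i) ∧
      ∀ w : BraidGroup n,
        ∃! p : ℤ × BraidMonoid n,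
          PrimeToDelta p.2 ∧ w = ι (garsideDelta n) ^ p.1 * ι p.2 := by
  refine ⟨GarN.iota, fun i => GarN.iota_sp i, ?_⟩
  intro w
  obtain ⟨z, a, hza⟩ := GarN.exist_raw w
  obtain ⟨k, b, hb, hab⟩ := GarN.prime_reduce hn a
  refine ⟨(z + (k : ℤ), b), ⟨hb, ?_⟩, ?_⟩
  · show w = GarN.iota (garsideDelta n) ^ (z + (k : ℤ)) * GarN.iota b
    rw [show GarN.iota (garsideDelta n) = GarN.DD n from rfl]
    rw [hza, hab, ← mul_assoc, ← zpow_add]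
  · rintro ⟨z', b'⟩ ⟨h1, h2⟩
    rw [show GarN.iota (garsideDelta n) = GarN.DD n from rfl] at h2
    have h3 : GarN.DD n ^ z' * GarN.iota b' = GarN.DD n ^ (z + (k : ℤ)) * GarN.iota b := by
      rw [← h2, hza, hab, ← mul_assoc, ← zpow_add]
    rcases le_total (z + (k : ℤ)) z' with hle | hle
    · obtain ⟨he, hbe⟩ := GarN.uniq_aux z' (z + (k : ℤ)) b' b h1 hb hle h3
      exact Prod.ext he hbe
    · obtain ⟨he, hbe⟩ := GarN.uniq_aux (z + (k : ℤ)) z' b b' hb h1 hle h3.symm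
      exact Prod.ext he.symm hbe.symm
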